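/- Let a < b be real numbers and let r : (a,b) → ℝ be twice differentiable with 0 < r(t) < 1 for all t ∈ (a,b), satisfying the catenoid profile equation 4·r(t)·r''(t) − 4·r'(t)² − (1 − r(t)⁴) = 0 on (a,b). Then the function t ↦ (1−r(t)²)²/(4 r(t)²) + (r'(t)/r(t))² is constant on (a,b); moreover, if κ ≥ 0 denotes the nonnegative square root of that constant value, then r(t) ≥ √(1+κ²) − κ for every t ∈ (a,b). -/

import Mathlib

open Set

/-- First integral of the catenoid profile equation and neck lower bound. -/
theorem catenoid_first_integral
    (a b : ℝ) (hab : a < b) (r r' r'' : ℝ → ℝ)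
    (hderiv : ∀ t ∈ Set.Ioo a b, HasDerivAt r (r' t) t)
    (hderiv' : ∀ t ∈ Set.Ioo a b, HasDerivAt r' (r'' t) t)
    (hr : ∀ t ∈ Set.Ioo a b, 0 < r t ∧ r t < 1)
    (hode : ∀ t ∈ Set.Ioo a b,
      4 * r t * r'' t - 4 * (r' t) ^ 2 - (1 - (r t) ^ 4) = 0) :
    ∃ C : ℝ,
      (∀ t ∈ Set.Ioo a b,
        (1 - (r t) ^ 2) ^ 2 / (4 * (r t) ^ 2) + (r' t / r t) ^ 2 = C) ∧
      (∀ t ∈ Set.Ioo a b,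
        Real.sqrt (1 + Real.sqrt C ^ 2) - Real.sqrt C ≤ r t) := by
  set g : ℝ → ℝ := fun t => (1 - (r t) ^ 2) ^ 2 / (4 * (r t) ^ 2) + (r' t / r t) ^ 2 with hgdef
  have hg0 : ∀ t ∈ Set.Ioo a b, HasDerivAt g 0 t := by
    intro t ht
    obtain ⟨hr0, hr1⟩ := hr t ht
    have hne : r t ≠ 0 := ne_of_gt hr0
    have hA : HasDerivAt (fun u => (1 - (r u) ^ 2) ^ 2 / (4 * (r u) ^ 2))
        ((((2:ℕ) : ℝ) * (1 - (r t) ^ 2) ^ 1 * (0 - ((2:ℕ) : ℝ) * (r t) ^ 1 * r' t)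
            * (4 * (r t) ^ 2)
          - (1 - (r t) ^ 2) ^ 2 * (4 * (((2:ℕ) : ℝ) * (r t) ^ 1 * r' t)))
          / (4 * (r t) ^ 2) ^ 2) t := by
      exact (((hasDerivAt_const t (1:ℝ)).sub ((hderiv t ht).pow 2)).pow 2).div
        (((hderiv t ht).pow 2).const_mul 4) (by positivity)
    have hB : HasDerivAt (fun u => (r' u / r u) ^ 2)
        (((2:ℕ) : ℝ) * (r' t / r t) ^ 1 *
          ((r'' t * r t - r' t * r' t) / (r t) ^ 2)) t :=
      ((hderiv' t ht).div (hderiv t ht) hne).pow 2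
    have hD := hA.add hB
    have hzero :
        (((2:ℕ) : ℝ) * (1 - (r t) ^ 2) ^ 1 * (0 - ((2:ℕ) : ℝ) * (r t) ^ 1 * r' t)
            * (4 * (r t) ^ 2)
          - (1 - (r t) ^ 2) ^ 2 * (4 * (((2:ℕ) : ℝ) * (r t) ^ 1 * r' t)))
          / (4 * (r t) ^ 2) ^ 2
        + ((2:ℕ) : ℝ) * (r' t / r t) ^ 1 *
          ((r'' t * r t - r' t * r' t) / (r t) ^ 2) = 0 := by
      have h := hode t ht
      field_simp
      linear_combination (2 * r' t) * h
    exact hzero ▸ hD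
  have ht0 : (a + b) / 2 ∈ Set.Ioo a b := ⟨by linarith, by linarith⟩
  set C := g ((a + b) / 2) with hC
  have hconst : ∀ t ∈ Set.Ioo a b, g t = C := by
    intro t ht
    exact (convex_Ioo a b).is_const_of_fderivWithin_eq_zero
      (fun x hx => (hg0 x hx).differentiableAt.differentiableWithinAt)
      (fun x hx => by
        rw [((hg0 x hx).hasFDerivAt.hasFDerivWithinAt).fderivWithin
          (isOpen_Ioo.uniqueDiffWithinAt hx)]
        ext; simp) ht ht0
  have hCnonneg : 0 ≤ C := by
    obtain ⟨hr0, hr1⟩ := hr _ ht0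
    rw [hC, hgdef]
    positivity
  refine ⟨C, hconst, ?_⟩
  intro t ht
  obtain ⟨hr0, hr1⟩ := hr t ht
  have hne : r t ≠ 0 := ne_of_gt hr0
  have hgt : (1 - (r t) ^ 2) ^ 2 / (4 * (r t) ^ 2) + (r' t / r t) ^ 2 = C := hconst t ht
  have key : (1 - (r t) ^ 2) ^ 2 ≤ 4 * (r t) ^ 2 * C := by
    have h2 : (1 - (r t) ^ 2) ^ 2 / (4 * (r t) ^ 2) ≤ C := by
      have h0 : (r' t / r t) ^ 2 ≥ 0 := sq_nonneg _
      linarith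
    have h3 : (0:ℝ) < 4 * (r t) ^ 2 := by positivity
    calc (1 - (r t) ^ 2) ^ 2 = (1 - (r t) ^ 2) ^ 2 / (4 * (r t) ^ 2) * (4 * (r t) ^ 2) := by
          field_simp
      _ ≤ C * (4 * (r t) ^ 2) := by exact mul_le_mul_of_nonneg_right h2 (le_of_lt h3)
      _ = 4 * (r t) ^ 2 * C := by ring
  -- deduce 1 - r² ≤ 2 r √C
  have hsq : 1 - (r t) ^ 2 ≤ 2 * r t * Real.sqrt C := by
    have h1 : 1 - (r t) ^ 2 = Real.sqrt ((1 - (r t) ^ 2) ^ 2) := by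
      rw [Real.sqrt_sq (by nlinarith)]
    have h2 : Real.sqrt ((1 - (r t) ^ 2) ^ 2) ≤ Real.sqrt (4 * (r t) ^ 2 * C) :=
      Real.sqrt_le_sqrt key
    have h3 : Real.sqrt (4 * (r t) ^ 2 * C) = 2 * r t * Real.sqrt C := by
      rw [show 4 * (r t) ^ 2 * C = (2 * r t) ^ 2 * C by ring,
        Real.sqrt_mul (by positivity), Real.sqrt_sq (by positivity)]
    linarith [h1 ▸ (h3 ▸ h2)]
  have hsC : Real.sqrt C ^ 2 = C := Real.sq_sqrt hCnonneg
  rw [hsC]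
  have h4 : Real.sqrt (1 + C) ≤ r t + Real.sqrt C := by
    have h5 : 1 + C ≤ (r t + Real.sqrt C) ^ 2 := by
      have := Real.sq_sqrt hCnonneg
      nlinarith [hsq]
    calc Real.sqrt (1 + C) ≤ Real.sqrt ((r t + Real.sqrt C) ^ 2) := Real.sqrt_le_sqrt h5
      _ = r t + Real.sqrt C := Real.sqrt_sq (by positivity)
  linarith
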